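/- If f₁ : H₁ → G₁ and f₂ : H₂ → G₂ are core-free virtual endomorphisms, then the product map (f₁, f₂) : H₁ × H₂ → G₁ × G₂ is a core-free virtual endomorphism of G₁ × G₂, and the index [G₁ × G₂ : H₁ × H₂] equals [G₁ : H₁]·[G₂ : H₂]. -/
import Mathlib


/-- `f : H → G` is a core-free virtual endomorphism: no nontrivial subgroup `K ≤ H`,
normal in `G`, satisfies `f(K) ≤ K`. -/
def CoreFree {G : Type*} [Group G] (H : Subgroup G) (f : ↥H →* G) : Prop :=
  ∀ K : Subgroup G, K ≤ H → K.Normal → (∀ x : ↥H, (x : G) ∈ K → f x ∈ K) → K = ⊥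

/-- The product virtual endomorphism `(f₁, f₂) : H₁ × H₂ → G₁ × G₂`. -/
def prodVE {G₁ G₂ : Type*} [Group G₁] [Group G₂] (H₁ : Subgroup G₁) (H₂ : Subgroup G₂)
    (f₁ : ↥H₁ →* G₁) (f₂ : ↥H₂ →* G₂) : ↥(H₁.prod H₂) →* G₁ × G₂ :=
  MonoidHom.mk' (fun x => (f₁ ⟨(x : G₁ × G₂).1, x.2.1⟩, f₂ ⟨(x : G₁ × G₂).2, x.2.2⟩))
    (by
      intro a b
      ext <;> simp [← map_mul] <;> rfl)

/-- the product of two core-free virtual endomorphisms is a core-free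
virtual endomorphism, of index the product of the indices. -/
theorem prodVE_coreFree {G₁ G₂ : Type*} [Group G₁] [Group G₂]
    (H₁ : Subgroup G₁) (H₂ : Subgroup G₂) [H₁.FiniteIndex] [H₂.FiniteIndex]
    (f₁ : ↥H₁ →* G₁) (f₂ : ↥H₂ →* G₂)
    (h₁ : CoreFree H₁ f₁) (h₂ : CoreFree H₂ f₂) :
    CoreFree (H₁.prod H₂) (prodVE H₁ H₂ f₁ f₂) ∧
      (H₁.prod H₂).index = H₁.index * H₂.index := by
  refine ⟨?_, Subgroup.index_prod H₁ H₂⟩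
  intro K hKle hKn hKf
  have hK₁ : K.map (MonoidHom.fst G₁ G₂) = ⊥ := by
    refine h₁ _ ?_ (Subgroup.Normal.map hKn _ Prod.fst_surjective) ?_
    · rintro x ⟨⟨a, b⟩, hm, rfl⟩
      exact (hKle hm).1
    · rintro ⟨x, hx⟩ ⟨⟨a, b⟩, hm, hxa⟩
      have hb : b ∈ H₂ := (hKle hm).2
      have := hKf ⟨(a, b), (hKle hm).1, hb⟩ hm
      refine ⟨_, this, ?_⟩
      simp only [prodVE, MonoidHom.mk'_apply, MonoidHom.coe_fst]
      exact congrArg f₁ (Subtype.ext hxa)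
  have hK₂ : K.map (MonoidHom.snd G₁ G₂) = ⊥ := by
    refine h₂ _ ?_ (Subgroup.Normal.map hKn _ Prod.snd_surjective) ?_
    · rintro x ⟨⟨a, b⟩, hm, rfl⟩
      exact (hKle hm).2
    · rintro ⟨x, hx⟩ ⟨⟨a, b⟩, hm, hxa⟩
      have := hKf ⟨(a, b), (hKle hm).1, (hKle hm).2⟩ hm
      refine ⟨_, this, ?_⟩
      simp only [prodVE, MonoidHom.mk'_apply, MonoidHom.coe_snd]
      exact congrArg f₂ (Subtype.ext hxa)
  rw [eq_bot_iff]
  rintro ⟨a, b⟩ hm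
  have ha : a = 1 := by
    have : a ∈ K.map (MonoidHom.fst G₁ G₂) := ⟨(a, b), hm, rfl⟩
    simpa [hK₁] using this
  have hb : b = 1 := by
    have : b ∈ K.map (MonoidHom.snd G₁ G₂) := ⟨(a, b), hm, rfl⟩
    simpa [hK₂] using this
  simp [ha, hb, Prod.ext_iff]
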